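/- Let A and B be C*-algebras and let u : A → B be a completely positive map with ‖u‖ ≤ 1. If a ∈ A satisfies u(a*a) = u(a)*u(a), then u(xa) = u(x)u(a) for every x ∈ A. -/

import Mathlib

noncomputable section

def IsStarSquare {R n : Type*} [Fintype n] [NonUnitalSemiring R] [StarRing R]
    (M : Matrix n n R) : Prop :=
  ∃ N : Matrix n n R, M = N.conjTranspose * N

/-- A (not necessarily linear) map between `*`-rings is *completely positive* if all of its
matrix amplifications send positive matrices (i.e. star-squares) to positive matrices. -/
def IsCPMap {A B : Type*} [NonUnitalSemiring A] [StarRing A] [NonUnitalSemiring B] [StarRing B]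
    (u : A → B) : Prop :=
  ∀ (k : ℕ) (M : Matrix (Fin k) (Fin k) A), IsStarSquare M → IsStarSquare (M.map u)

section Dec

variable {A B : Type*} [NonUnitalNormedRing A] [StarRing A] [NormedSpace ℂ A]
  [NonUnitalNormedRing B] [StarRing B] [NormedSpace ℂ B]

/-- The set of `max ‖S₁‖ ‖S₂‖` over all completely positive `S₁, S₂` making the
2×2 sandwich map completely positive. -/
def decSet (u : A →L[ℂ] B) : Set ℝ :=
  { r | ∃ S₁ S₂ : A →L[ℂ] B, IsCPMap ⇑S₁ ∧ IsCPMap ⇑S₂ ∧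
      IsCPMap (fun x => (!![S₁ x, u x; star (u (star x)), S₂ x] : Matrix (Fin 2) (Fin 2) B)) ∧
      r = max ‖S₁‖ ‖S₂‖ }

/-- A map is decomposable when it is a linear combination of completely positive maps. -/
def IsDecomposable (u : A →L[ℂ] B) : Prop :=
  ∃ u₁ u₂ u₃ u₄ : A →L[ℂ] B, IsCPMap ⇑u₁ ∧ IsCPMap ⇑u₂ ∧ IsCPMap ⇑u₃ ∧ IsCPMap ⇑u₄ ∧
    u = u₁ - u₂ + Complex.I • (u₃ - u₄)

/-- Haagerup's decomposable norm. -/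
def decNorm (u : A →L[ℂ] B) : ℝ := sInf (decSet u)

end Dec

set_option maxHeartbeats 1000000

section ChoiAux

variable {A B : Type*} [NonUnitalCStarAlgebra A] [NonUnitalCStarAlgebra B]

lemma isCP_one {u : A →L[ℂ] B} (hcp : IsCPMap ⇑u) (s : A) :
    ∃ n : B, u (star s * s) = star n * n := by
  obtain ⟨P, hP⟩ := hcp 1 (Matrix.of fun _ _ => star s * s)
    ⟨Matrix.of fun _ _ => s, by
      ext i j
      simp [Matrix.mul_apply, Matrix.conjTranspose_apply]⟩
  refine ⟨P 0 0, ?_⟩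
  have := congrFun (congrFun hP 0) 0
  simpa [Matrix.mul_apply, Matrix.conjTranspose_apply] using this

lemma isCP_two {u : A →L[ℂ] B} (hcp : IsCPMap ⇑u) (r s : A) :
    ∃ P : Matrix (Fin 2) (Fin 2) B,
      u (star r * r) = star (P 0 0) * P 0 0 + star (P 1 0) * P 1 0 ∧
      u (star r * s) = star (P 0 0) * P 0 1 + star (P 1 0) * P 1 1 ∧
      u (star s * r) = star (P 0 1) * P 0 0 + star (P 1 1) * P 1 0 ∧
      u (star s * s) = star (P 0 1) * P 0 1 + star (P 1 1) * P 1 1 := by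
  obtain ⟨P, hP⟩ := hcp 2 (Matrix.of ![![star r * r, star r * s], ![star s * r, star s * s]])
    ⟨Matrix.of ![![r, s], ![0, 0]], by
      ext i j
      fin_cases i <;> fin_cases j <;>
        simp [Matrix.mul_apply, Matrix.conjTranspose_apply, Fin.sum_univ_two]⟩
  refine ⟨P, ?_, ?_, ?_, ?_⟩
  · have := congrFun (congrFun hP 0) 0
    simpa [Matrix.mul_apply, Matrix.conjTranspose_apply, Fin.sum_univ_two] using this
  · have := congrFun (congrFun hP 0) 1
    simpa [Matrix.mul_apply, Matrix.conjTranspose_apply, Fin.sum_univ_two] using this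
  · have := congrFun (congrFun hP 1) 0
    simpa [Matrix.mul_apply, Matrix.conjTranspose_apply, Fin.sum_univ_two] using this
  · have := congrFun (congrFun hP 1) 1
    simpa [Matrix.mul_apply, Matrix.conjTranspose_apply, Fin.sum_univ_two] using this

lemma selfadjoint_decomp (h : A) (hh : IsSelfAdjoint h) :
    ∃ s₁ s₂ : A, IsSelfAdjoint s₁ ∧ IsSelfAdjoint s₂ ∧ h = s₁ * s₁ - s₂ * s₂ := by
  have hc1 : Continuous fun t : ℝ => Real.sqrt (max t 0) :=
    Real.continuous_sqrt.comp (continuous_id.max continuous_const)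
  have hc2 : Continuous fun t : ℝ => Real.sqrt (max (-t) 0) :=
    Real.continuous_sqrt.comp (continuous_neg.max continuous_const)
  refine ⟨cfcₙ (fun t : ℝ => Real.sqrt (max t 0)) h,
    cfcₙ (fun t : ℝ => Real.sqrt (max (-t) 0)) h, cfcₙ_predicate _ _, cfcₙ_predicate _ _, ?_⟩
  rw [← cfcₙ_mul _ _ h (hc1.continuousOn) (by simp) (hc1.continuousOn) (by simp),
    ← cfcₙ_mul _ _ h (hc2.continuousOn) (by simp) (hc2.continuousOn) (by simp),
    ← cfcₙ_sub _ _ h]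
  · conv_lhs => rw [← cfcₙ_id ℝ h]
    apply cfcₙ_congr
    intro t _
    simp only [id_eq]
    rw [Real.mul_self_sqrt (le_max_right _ _), Real.mul_self_sqrt (le_max_right _ _)]
    exact (max_zero_sub_max_neg_zero_eq_self t).symm

lemma u_selfadjoint {u : A →L[ℂ] B} (hcp : IsCPMap ⇑u) {h : A} (hh : IsSelfAdjoint h) :
    IsSelfAdjoint (u h) := by
  obtain ⟨s₁, s₂, h1, h2, rfl⟩ := selfadjoint_decomp h hh
  rw [map_sub]
  have e1 : s₁ * s₁ = star s₁ * s₁ := by rw [h1.star_eq]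
  have e2 : s₂ * s₂ = star s₂ * s₂ := by rw [h2.star_eq]
  obtain ⟨n₁, hn₁⟩ := isCP_one hcp s₁
  obtain ⟨n₂, hn₂⟩ := isCP_one hcp s₂
  rw [e1, e2, hn₁, hn₂]
  exact (IsSelfAdjoint.star_mul_self n₁).sub (IsSelfAdjoint.star_mul_self n₂)

lemma u_star {u : A →L[ℂ] B} (hcp : IsCPMap ⇑u) (x : A) : u (star x) = star (u x) := by
  have h1 : IsSelfAdjoint (u (x + star x)) :=
    u_selfadjoint hcp (by simp [IsSelfAdjoint, star_add, add_comm])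
  have h2 : IsSelfAdjoint (u (Complex.I • x - Complex.I • star x)) := by
    refine u_selfadjoint hcp ?_
    simp only [IsSelfAdjoint, star_sub, star_smul, star_star, Complex.star_def, Complex.conj_I,
      neg_smul, sub_neg_eq_add, neg_sub]
    abel
  rw [isSelfAdjoint_iff, map_add] at h1
  rw [isSelfAdjoint_iff, map_sub, map_smul, map_smul] at h2
  rw [star_add] at h1
  rw [star_sub, star_smul, star_smul, Complex.star_def, Complex.conj_I] at h2
  -- h1 : star (u x) + star (u (star x)) = u x + u (star x)
  -- h2 : -I • star (u x) - -I • star (u (star x)) = I • u x - I • u (star x)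
  have key : (2 * Complex.I) • star (u (star x)) = (2 * Complex.I) • u x := by
    calc (2 * Complex.I) • star (u (star x))
        = Complex.I • (star (u x) + star (u (star x)))
          + ((-Complex.I) • star (u x) - (-Complex.I) • star (u (star x)))
          - (Complex.I • star (u x) + (-Complex.I) • star (u x)) := by module
      _ = Complex.I • (u x + u (star x)) + (Complex.I • u x - Complex.I • u (star x)) - 0 := by
          rw [h1, h2]; simp [neg_smul]
      _ = (2 * Complex.I) • u x := by module
  have h2I : (2 * Complex.I) ≠ 0 := by simp [Complex.I_ne_zero]
  have := smul_right_injective B h2I key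
  rw [← this, star_star]

lemma cp_sandwich {u : A →L[ℂ] B} (hcp : IsCPMap ⇑u)
    [PartialOrder (Unitization ℂ B)] [StarOrderedRing (Unitization ℂ B)]
    (r s : A) (w₁ w₂ : Unitization ℂ B) :
    0 ≤ star w₁ * ((u (star r * r) : B) : Unitization ℂ B) * w₁
      + star w₁ * ((u (star r * s) : B) : Unitization ℂ B) * w₂
      + star w₂ * ((u (star s * r) : B) : Unitization ℂ B) * w₁
      + star w₂ * ((u (star s * s) : B) : Unitization ℂ B) * w₂ := by
  obtain ⟨P, h00, h01, h10, h11⟩ := isCP_two hcp r s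
  set c₀ : Unitization ℂ B := ((P 0 0 : B) : Unitization ℂ B) * w₁ + ((P 0 1 : B) : Unitization ℂ B) * w₂ with hc₀
  set c₁ : Unitization ℂ B := ((P 1 0 : B) : Unitization ℂ B) * w₁ + ((P 1 1 : B) : Unitization ℂ B) * w₂ with hc₁
  have key : star w₁ * ((u (star r * r) : B) : Unitization ℂ B) * w₁
      + star w₁ * ((u (star r * s) : B) : Unitization ℂ B) * w₂
      + star w₂ * ((u (star s * r) : B) : Unitization ℂ B) * w₁
      + star w₂ * ((u (star s * s) : B) : Unitization ℂ B) * w₂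
      = star c₀ * c₀ + star c₁ * c₁ := by
    rw [h00, h01, h10, h11, hc₀, hc₁]
    simp only [Unitization.inr_add, Unitization.inr_mul, Unitization.inr_star, star_add, star_mul]
    noncomm_ring
  rw [key]
  exact add_nonneg (star_mul_self_nonneg c₀) (star_mul_self_nonneg c₁)

lemma kadison_schwarz {u : A →L[ℂ] B} (hcp : IsCPMap ⇑u) (hu : ‖u‖ ≤ 1)
    [PartialOrder (Unitization ℂ B)] [StarOrderedRing (Unitization ℂ B)] (y : A) :
    0 ≤ ((u (star y * y) : B) : Unitization ℂ B)
      - star ((u y : B) : Unitization ℂ B) * ((u y : B) : Unitization ℂ B) := by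
  set W : Unitization ℂ B := ((u y : B) : Unitization ℂ B) with hW
  set Q : Unitization ℂ B := ((u (star y * y) : B) : Unitization ℂ B) with hQ
  have hclosed : IsClosed {c : Unitization ℂ B | 0 ≤ c} := CStarAlgebra.isClosed_nonneg (A := Unitization ℂ B)
  have hz : Q - star W * W ∈ closure {c : Unitization ℂ B | 0 ≤ c} := by
    rw [Metric.mem_closure_iff]
    intro ε hε
    set M : ℝ := 2 * ‖u y‖ + 1 with hM
    have hM0 : (0:ℝ) < M := by positivity
    set δ : ℝ := (ε / (2 * M)) ^ 2 with hδdef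
    have hδ : 0 < δ := by positivity
    have hsqrtδ : Real.sqrt δ = ε / (2 * M) := Real.sqrt_sq (by positivity)
    -- the quasi-unit e
    set q : A := y * star y with hqdef
    have hq : IsSelfAdjoint q := IsSelfAdjoint.mul_star_self y
    set f : ℝ → ℝ := fun t => min 1 (|t| / δ) with hfdef
    have hfc : Continuous f := by
      apply Continuous.min continuous_const
      exact (continuous_abs).div_const δ
    have hf0 : f 0 = 0 := by simp [hfdef]
    have hfnn : ∀ t : ℝ, 0 ≤ f t := fun t => le_min zero_le_one (by positivity)
    have hfle1 : ∀ t : ℝ, f t ≤ 1 := fun t => min_le_left _ _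
    set e : A := cfcₙ f q with hedef
    have he : IsSelfAdjoint e := cfcₙ_predicate _ _
    have he_norm : ‖e‖ ≤ 1 := norm_cfcₙ_le fun t _ => by
      rw [Real.norm_eq_abs, abs_of_nonneg (hfnn t)]; exact hfle1 t
    -- the small element c
    set c : A := e * y - y with hcdef
    have hstarc : star c = star y * e - star y := by
      rw [hcdef, star_sub, star_mul, he.star_eq]
    have hkey : c * star c = (e * q * e - e * q) - (q * e - q) := by
      rw [hcdef, hstarc, hqdef]; noncomm_ring
    have h1 : cfcₙ (fun t : ℝ => f t * t) q = e * q := by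
      rw [cfcₙ_mul f (fun t => t) q hfc.continuousOn hf0 continuous_id.continuousOn rfl,
        cfcₙ_id' ℝ q]
    have h3 : cfcₙ (fun t : ℝ => t * f t) q = q * e := by
      rw [cfcₙ_mul (fun t => t) f q continuous_id.continuousOn rfl hfc.continuousOn hf0,
        cfcₙ_id' ℝ q]
    have h2 : cfcₙ (fun t : ℝ => f t * t * f t) q = e * q * e := by
      rw [cfcₙ_mul (fun t => f t * t) f q ((hfc.mul continuous_id).continuousOn)
        (by simp [hf0]) hfc.continuousOn hf0, h1]
    have hcfc : c * star c
        = cfcₙ (fun t : ℝ => (f t * t * f t - f t * t) - (t * f t - t)) q := by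
      rw [cfcₙ_sub (fun t : ℝ => f t * t * f t - f t * t) (fun t : ℝ => t * f t - t) q
          (((hfc.mul continuous_id).mul hfc).sub (hfc.mul continuous_id)).continuousOn
          (by simp [hf0])
          ((continuous_id.mul hfc).sub continuous_id).continuousOn (by simp [hf0]),
        cfcₙ_sub (fun t : ℝ => f t * t * f t) (fun t : ℝ => f t * t) q
          ((hfc.mul continuous_id).mul hfc).continuousOn (by simp [hf0])
          (hfc.mul continuous_id).continuousOn (by simp [hf0]),
        cfcₙ_sub (fun t : ℝ => t * f t) (fun t : ℝ => t) q
          (continuous_id.mul hfc).continuousOn (by simp [hf0])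
          continuous_id.continuousOn rfl,
        cfcₙ_id' ℝ q, h1, h2, h3, hkey]
    have hbound : ∀ t ∈ quasispectrum ℝ q,
        ‖(f t * t * f t - f t * t) - (t * f t - t)‖ ≤ δ := by
      intro t _
      have hft : (f t * t * f t - f t * t) - (t * f t - t) = t * (1 - f t)^2 := by ring
      rw [hft, Real.norm_eq_abs, abs_mul, abs_pow, abs_of_nonneg (sub_nonneg.mpr (hfle1 t))]
      rcases le_or_gt |t| δ with h | h
      · have h9 : (1 - f t) ^ 2 ≤ 1 := by nlinarith [hfnn t, hfle1 t]
        calc |t| * (1 - f t) ^ 2 ≤ |t| * 1 :=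
              mul_le_mul_of_nonneg_left h9 (abs_nonneg t)
          _ = |t| := mul_one _
          _ ≤ δ := h
      · have hft1 : f t = 1 := by
          rw [hfdef]
          exact min_eq_left ((one_le_div hδ).mpr h.le)
        simp [hft1, hδ.le]
    have hcnorm : ‖c‖ ≤ Real.sqrt δ := by
      have h4 : ‖c‖ ^ 2 ≤ δ := by
        rw [sq, ← CStarRing.norm_self_mul_star, hcfc]
        exact norm_cfcₙ_le hbound
      calc ‖c‖ = Real.sqrt (‖c‖ ^ 2) := (Real.sqrt_sq (norm_nonneg c)).symm
        _ ≤ Real.sqrt δ := Real.sqrt_le_sqrt h4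
    -- positivity of z'
    set X : Unitization ℂ B := ((u (star e * e) : B) : Unitization ℂ B) with hX
    set Y : Unitization ℂ B := ((u (star e * y) : B) : Unitization ℂ B) with hY
    set Z : Unitization ℂ B := ((u (star y * e) : B) : Unitization ℂ B) with hZ
    have hze := cp_sandwich hcp e y (-W) 1
    simp only [star_neg, star_one, mul_one, one_mul, neg_mul, mul_neg, neg_neg] at hze
    -- hze : 0 ≤ star W * X * W + -(star W * Y) + (-(Z * W) + Q)  (shape TBD)
    have hXpos : 0 ≤ X := by
      obtain ⟨n, hn⟩ := isCP_one hcp e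
      rw [hX, hn, Unitization.inr_mul, Unitization.inr_star]
      exact star_mul_self_nonneg _
    have hXnorm : ‖X‖ ≤ 1 := by
      rw [hX, Unitization.norm_inr]
      have l1 : ‖u (star e * e)‖ ≤ ‖u‖ * ‖star e * e‖ := u.le_opNorm _
      have l2 : ‖star e * e‖ ≤ ‖star e‖ * ‖e‖ := norm_mul_le _ _
      rw [norm_star] at l2
      nlinarith [norm_nonneg e, norm_nonneg (star e * e), (norm_nonneg u : (0:ℝ) ≤ ‖u‖)]
    have hone : X ≤ 1 := (CStarAlgebra.norm_le_one_iff_of_nonneg X hXpos).mp hXnorm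
    have hconj : star W * X * W ≤ star W * W := by
      have h := star_left_conjugate_le_conjugate hone W
      rwa [mul_one] at h
    have hz'pos : 0 ≤ star W * W - star W * Y - Z * W + Q := by
      have h6 := add_nonneg hze (sub_nonneg.mpr hconj)
      calc (0 : Unitization ℂ B) ≤ _ := h6
        _ = star W * W - star W * Y - Z * W + Q := by abel
    refine ⟨star W * W - star W * Y - Z * W + Q, hz'pos, ?_⟩
    -- distance estimate
    have hYW : Y - W = ((u c : B) : Unitization ℂ B) := by
      rw [hY, hW, ← Unitization.inr_sub, hcdef]
      congr 1
      rw [map_sub]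
      congr 2
      rw [he.star_eq]
    have hZW : Z - star W = ((u (star c) : B) : Unitization ℂ B) := by
      rw [hZ, hW, ← Unitization.inr_star, ← u_star hcp y, ← Unitization.inr_sub, hstarc]
      congr 1
      rw [map_sub]
    have hdiff : (Q - star W * W) - (star W * W - star W * Y - Z * W + Q)
        = star W * (Y - W) + (Z - star W) * W := by noncomm_ring
    have hucnorm : ‖u c‖ ≤ Real.sqrt δ := by
      calc ‖u c‖ ≤ ‖u‖ * ‖c‖ := u.le_opNorm c
        _ ≤ 1 * Real.sqrt δ := mul_le_mul hu hcnorm (norm_nonneg c) zero_le_one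
        _ = Real.sqrt δ := one_mul _
    have hucnorm' : ‖u (star c)‖ ≤ Real.sqrt δ := by
      calc ‖u (star c)‖ ≤ ‖u‖ * ‖star c‖ := u.le_opNorm _
        _ = ‖u‖ * ‖c‖ := by rw [norm_star]
        _ ≤ 1 * Real.sqrt δ := mul_le_mul hu hcnorm (norm_nonneg c) zero_le_one
        _ = Real.sqrt δ := one_mul _
    rw [dist_eq_norm]
    calc ‖(Q - star W * W) - (star W * W - star W * Y - Z * W + Q)‖
        = ‖star W * (Y - W) + (Z - star W) * W‖ := by rw [hdiff]
      _ ≤ ‖star W * (Y - W)‖ + ‖(Z - star W) * W‖ := norm_add_le _ _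
      _ ≤ ‖star W‖ * ‖Y - W‖ + ‖Z - star W‖ * ‖W‖ :=
          add_le_add (norm_mul_le _ _) (norm_mul_le _ _)
      _ = ‖u y‖ * ‖u c‖ + ‖u (star c)‖ * ‖u y‖ := by
          rw [hYW, hZW, norm_star, hW, Unitization.norm_inr, Unitization.norm_inr,
            Unitization.norm_inr]
      _ ≤ ‖u y‖ * Real.sqrt δ + Real.sqrt δ * ‖u y‖ :=
          add_le_add (mul_le_mul_of_nonneg_left hucnorm (norm_nonneg _))
            (mul_le_mul_of_nonneg_right hucnorm' (norm_nonneg _))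
      _ = 2 * ‖u y‖ * Real.sqrt δ := by ring
      _ < ε := by
          rw [hsqrtδ]
          have hs : 0 < ε / (2 * M) := by positivity
          have hcancel : (ε / (2 * M)) * (2 * M) = ε := div_mul_cancel₀ ε (by positivity)
          nlinarith [hs, hcancel, norm_nonneg (u y), hM]
  have := hclosed.closure_subset hz
  simpa using this

lemma real_smul_nonneg {C : Type*} [CStarAlgebra C] [PartialOrder C] [StarOrderedRing C]
    {v : C} (hv : 0 ≤ v) {r : ℝ} (hr : 0 ≤ r) : 0 ≤ ((r : ℂ)) • v := by
  have h := star_left_conjugate_nonneg hv (((Real.sqrt r : ℝ) : ℂ) • (1 : C))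
  have heq : star ((((Real.sqrt r : ℝ) : ℂ)) • (1 : C)) * v * ((((Real.sqrt r : ℝ) : ℂ)) • (1 : C))
      = ((r : ℂ)) • v := by
    rw [star_smul, star_one, Complex.star_def, Complex.conj_ofReal]
    rw [smul_mul_assoc, one_mul, mul_smul_comm, mul_one, smul_smul, ← Complex.ofReal_mul,
      Real.mul_self_sqrt hr]
  rwa [heq] at h

end ChoiAux

/-- **Choi's multiplicative domain lemma.** If a contractive completely positive map
`u` between C*-algebras satisfies `u (a* a) = (u a)* (u a)`, then
`u (x a) = u x * u a` for every `x`. -/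
theorem cp_contraction_mul_right
    {A B : Type*} [NonUnitalCStarAlgebra A] [NonUnitalCStarAlgebra B]
    (u : A →L[ℂ] B) (hcp : IsCPMap ⇑u) (hu : ‖u‖ ≤ 1) (a : A)
    (ha : u (star a * a) = star (u a) * u a) :
    ∀ x : A, u (x * a) = u x * u a := by
  letI : PartialOrder (Unitization ℂ B) := CStarAlgebra.spectralOrder _
  haveI : StarOrderedRing (Unitization ℂ B) := CStarAlgebra.spectralOrderedRing _
  -- Step 1: D = 0 for every x
  have hD0 : ∀ x : A,
      u (star a * x) + u (star x * a) = star (u a) * u x + star (u x) * u a := by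
    intro x
    set Db : B := (u (star a * x) + u (star x * a))
      - (star (u a) * u x + star (u x) * u a) with hDb
    set Eb : B := u (star x * x) - star (u x) * u x with hEb
    have hks0 : ∀ y : A, (0 : Unitization ℂ B) ≤ ((u (star y * y) - star (u y) * u y : B) :
        Unitization ℂ B) := by
      intro y
      have h := kadison_schwarz hcp hu y
      simpa [Unitization.inr_sub, Unitization.inr_mul, Unitization.inr_star] using h
    have hEpos : (0 : Unitization ℂ B) ≤ ((Eb : B) : Unitization ℂ B) := hks0 x
    have hkey : ∀ t : ℝ, (0 : Unitization ℂ B) ≤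
        ((t : ℂ)) • ((Db : B) : Unitization ℂ B)
          + (((t : ℂ)) * ((t : ℂ))) • ((Eb : B) : Unitization ℂ B) := by
      intro t
      have hks := hks0 (a + (t : ℂ) • x)
      have hstary : star (a + (t : ℂ) • x) = star a + (t : ℂ) • star x := by
        rw [star_add, star_smul, Complex.star_def, Complex.conj_ofReal]
      have hB : u (star (a + (t : ℂ) • x) * (a + (t : ℂ) • x))
            - star (u (a + (t : ℂ) • x)) * u (a + (t : ℂ) • x)
          = (t : ℂ) • Db + (((t : ℂ)) * ((t : ℂ))) • Eb := by
        rw [hstary, hDb, hEb]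
        simp only [add_mul, mul_add, smul_mul_assoc, mul_smul_comm, smul_smul,
          map_add, map_smul, star_add, star_smul, Complex.star_def, Complex.conj_ofReal]
        rw [ha]
        simp only [smul_add, smul_sub, add_mul, mul_add, smul_mul_assoc, mul_smul_comm,
          smul_smul]
        module
      rw [hB] at hks
      simpa [Unitization.inr_add, Unitization.inr_smul] using hks
    -- scale down by t
    have hkey' : ∀ t : ℝ, 0 < t →
        (0 : Unitization ℂ B) ≤ ((Db : B) : Unitization ℂ B)
            + ((t : ℂ)) • ((Eb : B) : Unitization ℂ B)
          ∧ (0 : Unitization ℂ B) ≤ -((Db : B) : Unitization ℂ B)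
            + ((t : ℂ)) • ((Eb : B) : Unitization ℂ B) := by
      intro t ht
      have r1 : t⁻¹ * t = 1 := inv_mul_cancel₀ ht.ne'
      have r2 : t⁻¹ * (t * t) = t := by field_simp
      have e1 : ((t⁻¹ : ℝ) : ℂ) * ((t : ℝ) : ℂ) = 1 := by exact_mod_cast r1
      have e2 : ((t⁻¹ : ℝ) : ℂ) * (((t : ℝ) : ℂ) * ((t : ℝ) : ℂ)) = ((t : ℝ) : ℂ) := by
        exact_mod_cast r2
      constructor
      · have h := real_smul_nonneg (hkey t) (le_of_lt (inv_pos.mpr ht))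
        rwa [smul_add, smul_smul, smul_smul, e1, e2, one_smul] at h
      · have h := real_smul_nonneg (hkey (-t)) (le_of_lt (inv_pos.mpr ht))
        have r3 : t⁻¹ * (-t) = -1 := by field_simp
        have r4 : t⁻¹ * (-t * -t) = t := by rw [neg_mul_neg]; field_simp
        have e3 : ((t⁻¹ : ℝ) : ℂ) * (((-t) : ℝ) : ℂ) = -1 := by exact_mod_cast r3
        have e4 : ((t⁻¹ : ℝ) : ℂ) * ((((-t) : ℝ) : ℂ) * (((-t) : ℝ) : ℂ)) = ((t : ℝ) : ℂ) := by
          exact_mod_cast r4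
        rwa [smul_add, smul_smul, smul_smul, e3, e4, neg_one_smul] at h
    -- norm argument gives Db = 0
    have hDle : ∀ t : ℝ, 0 < t → ‖((Db : B) : Unitization ℂ B)‖ ≤ 3 * t * ‖((Eb : B) : Unitization ℂ B)‖ := by
      intro t ht
      obtain ⟨hp, hn⟩ := hkey' t ht
      have hle : ((Db : B) : Unitization ℂ B) ≤ ((t : ℂ)) • ((Eb : B) : Unitization ℂ B) := by
        rw [neg_add_eq_sub] at hn
        exact sub_nonneg.mp hn
      have h2le : ((Db : B) : Unitization ℂ B) + ((t : ℂ)) • ((Eb : B) : Unitization ℂ B)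
          ≤ ((t : ℂ)) • ((Eb : B) : Unitization ℂ B) + ((t : ℂ)) • ((Eb : B) : Unitization ℂ B) :=
        add_le_add_left hle _
      have hnorm := CStarAlgebra.norm_le_norm_of_nonneg_of_le hp h2le
      have hsmul : ‖((t : ℂ)) • ((Eb : B) : Unitization ℂ B)‖
          = t * ‖((Eb : B) : Unitization ℂ B)‖ := by
        rw [norm_smul]
        congr 1
        rw [Complex.norm_real, Real.norm_eq_abs, abs_of_pos ht]
      calc ‖((Db : B) : Unitization ℂ B)‖
          ≤ ‖((Db : B) : Unitization ℂ B) + ((t : ℂ)) • ((Eb : B) : Unitization ℂ B)‖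
            + ‖((t : ℂ)) • ((Eb : B) : Unitization ℂ B)‖ := by
            have := norm_add_le (((Db : B) : Unitization ℂ B) + ((t : ℂ)) • ((Eb : B) : Unitization ℂ B))
              (-(((t : ℂ)) • ((Eb : B) : Unitization ℂ B)))
            simpa using this
        _ ≤ (‖((t : ℂ)) • ((Eb : B) : Unitization ℂ B)‖
            + ‖((t : ℂ)) • ((Eb : B) : Unitization ℂ B)‖)
            + ‖((t : ℂ)) • ((Eb : B) : Unitization ℂ B)‖ := by
            refine add_le_add_left (le_trans hnorm (norm_add_le _ _)) _
        _ = 3 * t * ‖((Eb : B) : Unitization ℂ B)‖ := by rw [hsmul]; ring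
    have hDb0 : ((Db : B) : Unitization ℂ B) = 0 := by
      rw [← norm_le_zero_iff]
      by_contra hlt
      push_neg at hlt
      set R := ‖((Eb : B) : Unitization ℂ B)‖ with hR
      have hR0 : 0 ≤ R := norm_nonneg _
      have ht0 : 0 < ‖((Db : B) : Unitization ℂ B)‖ / (6 * R + 1) := by positivity
      have h6 : (0:ℝ) < 6 * R + 1 := by positivity
      have hbd := hDle _ ht0
      have hcancel : ‖((Db : B) : Unitization ℂ B)‖ / (6 * R + 1) * (6 * R + 1)
          = ‖((Db : B) : Unitization ℂ B)‖ := div_mul_cancel₀ _ h6.ne'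
      nlinarith [hbd, hcancel, ht0, hR0, mul_nonneg ht0.le hR0]
    have hDbz : Db = 0 := by
      have : ((Db : B) : Unitization ℂ B) = (((0 : B)) : Unitization ℂ B) := by
        simpa using hDb0
      exact Unitization.inr_injective this
    rw [hDb] at hDbz
    exact sub_eq_zero.mp hDbz

  -- Step 2: polarization
  have hQ : ∀ x : A, u (star x * a) = star (u x) * u a := by
    intro x
    have h1 := hD0 x
    have h2 := hD0 (Complex.I • x)
    have h2' : Complex.I • u (star a * x) - Complex.I • u (star x * a)
        = Complex.I • (star (u a) * u x) - Complex.I • (star (u x) * u a) := by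
      rw [star_smul, Complex.star_def, Complex.conj_I] at h2
      simp only [mul_smul_comm, smul_mul_assoc, map_smul, neg_smul, neg_mul, map_neg,
        map_add, star_smul, Complex.star_def, Complex.conj_I, smul_neg] at h2
      linear_combination (norm := module) h2
    have key : (2 * Complex.I) • u (star x * a)
        = (2 * Complex.I) • (star (u x) * u a) := by
      calc (2 * Complex.I) • u (star x * a)
          = Complex.I • (u (star a * x) + u (star x * a))
            - (Complex.I • u (star a * x) - Complex.I • u (star x * a)) := by module
        _ = Complex.I • (star (u a) * u x + star (u x) * u a)
            - (Complex.I • (star (u a) * u x) - Complex.I • (star (u x) * u a)) := by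
            rw [h1, h2']
        _ = (2 * Complex.I) • (star (u x) * u a) := by module
    exact smul_right_injective B (by simp [Complex.I_ne_zero]) key
  intro x
  calc u (x * a) = u (star (star x) * a) := by rw [star_star]
    _ = star (u (star x)) * u a := hQ (star x)
    _ = u x * u a := by rw [u_star hcp x, star_star]
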